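/- Let f : [0,1] → ℂ be C¹ with ∫₀¹|f|² = 1 and let p_k denote the purity of the reduced density matrix of the first k qubits of the N → ∞ binary-grid encoding of f. Then lim_{k→∞} 4^k·(1 − p_k) = g₁(f)/6, where g₁(f) = ∫₀¹|f'|² − (∫₀¹ f'·conj f)(∫₀¹ f·conj f'). -/

import Mathlib

open MeasureTheory intervalIntegral Matrix

section PurityAux

open Finset Complex Set

lemma intervalIntegral_conj (g : ℝ → ℂ) (a b : ℝ) :
    ∫ x in a..b, (starRingEnd ℂ) (g x) = (starRingEnd ℂ) (∫ x in a..b, g x) := by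
  rw [intervalIntegral, intervalIntegral, integral_conj, integral_conj, ← RingHom.map_sub]

lemma normSq_diff_le (z w : ℂ) :
    |Complex.normSq z - Complex.normSq w| ≤ (‖z‖ + ‖w‖) * ‖z - w‖ := by
  rw [← Complex.sq_norm, ← Complex.sq_norm]
  have h : ‖z‖^2 - ‖w‖^2 = (‖z‖+‖w‖)*(‖z‖-‖w‖) := by ring
  rw [h, abs_mul, _root_.abs_of_nonneg (by positivity)]
  exact mul_le_mul_of_nonneg_left (abs_norm_sub_norm_le z w) (by positivity)

lemma bound_M (f : ℝ → ℂ) (hf : ContDiff ℝ 1 f) :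
    ∃ M : ℝ, 0 ≤ M ∧ ∀ x ∈ Set.Icc (0:ℝ) 2, ‖f x‖ ≤ M ∧ ‖deriv f x‖ ≤ M := by
  obtain ⟨M₁, h₁⟩ := isCompact_Icc.exists_bound_of_continuousOn
    (s := Set.Icc (0:ℝ) 2) hf.continuous.continuousOn
  obtain ⟨M₂, h₂⟩ := isCompact_Icc.exists_bound_of_continuousOn
    (s := Set.Icc (0:ℝ) 2) (hf.continuous_deriv le_rfl).continuousOn
  refine ⟨max (max M₁ M₂) 0, le_max_right _ _, fun x hx => ⟨?_, ?_⟩⟩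
  · exact le_trans (h₁ x hx) (le_trans (le_max_left _ _) (le_max_left _ _))
  · exact le_trans (h₂ x hx) (le_trans (le_max_right _ _) (le_max_left _ _))

lemma uc_P (f : ℝ → ℂ) (hf : ContDiff ℝ 1 f) {ε₀ : ℝ} (hε₀ : 0 < ε₀) :
    ∃ δ₀ > 0, ∀ x y x' y' : ℝ, x ∈ Set.Icc (0:ℝ) 2 → y ∈ Set.Icc (0:ℝ) 2 →
      x' ∈ Set.Icc (0:ℝ) 2 → y' ∈ Set.Icc (0:ℝ) 2 → |x - x'| < δ₀ → |y - y'| < δ₀ →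
      ‖f x * deriv f y - f x' * deriv f y'‖ ≤ ε₀ := by
  have hP : Continuous (fun q : ℝ × ℝ => f q.1 * deriv f q.2) :=
    (hf.continuous.comp continuous_fst).mul
      ((hf.continuous_deriv le_rfl).comp continuous_snd)
  have hK : IsCompact ((Set.Icc (0:ℝ) 2) ×ˢ (Set.Icc (0:ℝ) 2)) :=
    isCompact_Icc.prod isCompact_Icc
  have huc := hK.uniformContinuousOn_of_continuous hP.continuousOn
  rw [Metric.uniformContinuousOn_iff] at huc
  obtain ⟨δ₀, hδ₀, hd⟩ := huc ε₀ hε₀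
  refine ⟨δ₀, hδ₀, fun x y x' y' hx hy hx' hy' h1 h2 => ?_⟩
  have := hd (x, y) (Set.mk_mem_prod hx hy) (x', y') (Set.mk_mem_prod hx' hy') ?_
  · rw [dist_eq_norm] at this; exact le_of_lt this
  · rw [Prod.dist_eq]
    exact max_lt (by rwa [Real.dist_eq]) (by rwa [Real.dist_eq])

lemma ftc_shift (f : ℝ → ℂ) (hf : ContDiff ℝ 1 f) (x s t : ℝ) :
    f (x+t) - f (x+s) = ∫ τ in s..t, deriv f (x+τ) := by
  have hder : ∀ τ ∈ Set.uIcc s t, HasDerivAt (fun u => f (x+u)) (deriv f (x+τ)) τ := by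
    intro τ _
    have h1 : HasDerivAt f (deriv f (x+τ)) (x+τ) :=
      (hf.differentiable one_ne_zero (x+τ)).hasDerivAt
    exact h1.comp_const_add x τ
  rw [intervalIntegral.integral_eq_sub_of_hasDerivAt hder
    (((hf.continuous_deriv le_rfl).comp (continuous_const.add continuous_id)).intervalIntegrable _ _)]

lemma riemann_tendsto {E : Type*} [NormedAddCommGroup E] [NormedSpace ℝ E] [CompleteSpace E]
    (φ : ℝ → E) (hφ : Continuous φ) :
    Filter.Tendsto (fun n : ℕ => (n:ℝ)⁻¹ • ∑ j ∈ Finset.range n, φ (j / n))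
      Filter.atTop (nhds (∫ x in (0:ℝ)..1, φ x)) := by
  rw [NormedAddCommGroup.tendsto_atTop]
  intro ε hε
  have hc : IsCompact (Set.Icc (0:ℝ) 1) := isCompact_Icc
  have huc := (hc.uniformContinuousOn_of_continuous hφ.continuousOn)
  rw [Metric.uniformContinuousOn_iff] at huc
  obtain ⟨δ, hδ, hd⟩ := huc (ε/2) (by linarith)
  obtain ⟨N, hN⟩ := exists_nat_gt (1/δ)
  refine ⟨N + 1, fun n hn => ?_⟩
  have hn1 : 1 ≤ n := le_trans (Nat.le_add_left 1 N) hn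
  have hnpos : (0:ℝ) < n := by exact_mod_cast hn1
  have hinv : (n:ℝ)⁻¹ < δ := by
    rw [inv_lt_comm₀ hnpos hδ, ← one_div]
    calc 1/δ < N := hN
    _ ≤ n := by exact_mod_cast le_trans (Nat.le_add_right N 1) hn
  -- decompose integral
  have hint : ∀ (i:ℕ), i < n → IntervalIntegrable φ volume ((i:ℝ)/n) ((i+1:ℕ)/n) :=
    fun i _ => hφ.intervalIntegrable _ _
  have hsum := intervalIntegral.sum_integral_adjacent_intervals (a := fun i : ℕ => (i:ℝ)/n) hint
  simp only [Nat.cast_zero, zero_div] at hsum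
  have hlast : ((n:ℝ))/n = 1 := div_self (ne_of_gt hnpos)
  rw [hlast] at hsum
  rw [← hsum]
  have key : ∀ j ∈ Finset.range n,
      ‖(∫ x in ((j:ℝ)/n)..((j+1:ℕ):ℝ)/n, φ x) - (n:ℝ)⁻¹ • φ (j/n)‖ ≤ (ε/2) * (n:ℝ)⁻¹ := by
    intro j hj
    rw [Finset.mem_range] at hj
    have h1 : ((j+1:ℕ):ℝ)/n - (j:ℝ)/n = (n:ℝ)⁻¹ := by
      push_cast; field_simp; ring
    have h2 : (n:ℝ)⁻¹ • φ ((j:ℝ)/n) = ∫ _x in ((j:ℝ)/n)..((j+1:ℕ):ℝ)/n, φ ((j:ℝ)/n) := by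
      rw [intervalIntegral.integral_const, h1]
    rw [h2, ← intervalIntegral.integral_sub (hφ.intervalIntegrable _ _)
      (intervalIntegrable_const)]
    have hb := intervalIntegral.norm_integral_le_of_norm_le_const
      (a := (j:ℝ)/n) (b := ((j+1:ℕ):ℝ)/n) (C := ε/2) (f := fun x => φ x - φ ((j:ℝ)/n)) ?_
    · rw [h1] at hb
      rwa [_root_.abs_of_pos (by positivity)] at hb
    · intro x hx
      have hxmem : x ∈ Set.Icc ((j:ℝ)/n) (((j+1:ℕ):ℝ)/n) := by
        rw [Set.uIoc_of_le (by rw [div_le_div_iff_of_pos_right hnpos]; push_cast; linarith)] at hx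
        exact ⟨le_of_lt hx.1, hx.2⟩
      have hx0 : (0:ℝ) ≤ x := le_trans (by positivity) hxmem.1
      have hx1 : x ≤ 1 := le_trans hxmem.2 (by
        rw [div_le_one hnpos]; exact_mod_cast hj)
      have hj0 : ((j:ℝ)/n) ∈ Set.Icc (0:ℝ) 1 := by
        constructor
        · positivity
        · rw [div_le_one hnpos]; exact_mod_cast le_of_lt hj
      have hdist : dist x ((j:ℝ)/n) < δ := by
        rw [Real.dist_eq, _root_.abs_of_nonneg (by linarith [hxmem.1])]
        calc x - (j:ℝ)/n ≤ ((j+1:ℕ):ℝ)/n - (j:ℝ)/n := by linarith [hxmem.2]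
        _ = (n:ℝ)⁻¹ := h1
        _ < δ := hinv
      have := hd x ⟨hx0, hx1⟩ ((j:ℝ)/n) hj0 hdist
      rw [dist_eq_norm] at this
      exact le_of_lt this
  calc ‖(n:ℝ)⁻¹ • ∑ j ∈ Finset.range n, φ ((j:ℝ)/n) - ∑ i ∈ Finset.range n, ∫ x in ((i:ℝ)/n)..((i+1:ℕ):ℝ)/n, φ x‖
      = ‖∑ j ∈ Finset.range n, ((n:ℝ)⁻¹ • φ ((j:ℝ)/n) - ∫ x in ((j:ℝ)/n)..((j+1:ℕ):ℝ)/n, φ x)‖ := by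
        rw [Finset.sum_sub_distrib, Finset.smul_sum]
    _ ≤ ∑ j ∈ Finset.range n, ‖(n:ℝ)⁻¹ • φ ((j:ℝ)/n) - ∫ x in ((j:ℝ)/n)..((j+1:ℕ):ℝ)/n, φ x‖ :=
        norm_sum_le _ _
    _ ≤ ∑ _j ∈ Finset.range n, (ε/2) * (n:ℝ)⁻¹ := by
        refine Finset.sum_le_sum fun j hj => ?_
        rw [norm_sub_rev]
        exact key j hj
    _ = n * ((ε/2) * (n:ℝ)⁻¹) := by rw [Finset.sum_const, card_range, nsmul_eq_mul]
    _ < ε := by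
        rw [mul_comm (ε/2), ← mul_assoc, mul_inv_cancel₀ (ne_of_gt hnpos), one_mul]
        linarith

lemma lagrange_identity (f : ℝ → ℂ) (hfc : Continuous f) (h a b : ℝ) :
    Complex.ofReal (∫ s in (0:ℝ)..h, ∫ t in (0:ℝ)..h,
        Complex.normSq (f (a+s)*f (b+t) - f (a+t)*f (b+s)))
      = 2*((∫ w in (0:ℝ)..h, f (a+w) * (starRingEnd ℂ) (f (a+w)))
            * (∫ w in (0:ℝ)..h, f (b+w) * (starRingEnd ℂ) (f (b+w)))
          - (∫ w in (0:ℝ)..h, f (a+w) * (starRingEnd ℂ) (f (b+w)))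
            * (starRingEnd ℂ) (∫ w in (0:ℝ)..h, f (a+w) * (starRingEnd ℂ) (f (b+w)))) := by
  set R : ℝ → ℝ → ℂ := fun x y => ∫ w in (0:ℝ)..h, f (x+w) * (starRingEnd ℂ) (f (y+w)) with hR
  have hcont : ∀ x y : ℝ, Continuous (fun t : ℝ => f (x+t) * (starRingEnd ℂ) (f (y+t))) := by
    intro x y
    exact ((hfc.comp (continuous_const.add continuous_id)).mul
      (Complex.continuous_conj.comp (hfc.comp (continuous_const.add continuous_id))))
  have hii : ∀ (c : ℂ) (x y : ℝ), IntervalIntegrable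
      (fun t : ℝ => c * (f (x+t) * (starRingEnd ℂ) (f (y+t)))) volume 0 h :=
    fun c x y => (continuous_const.mul (hcont x y)).intervalIntegrable _ _
  have hRsym : R b a = (starRingEnd ℂ) (R a b) := by
    rw [hR, ← intervalIntegral_conj]
    simp only [_root_.map_mul, Complex.conj_conj]
    congr 1; ext w; ring
  have inner : ∀ s : ℝ, (∫ t in (0:ℝ)..h,
      ((Complex.normSq (f (a+s)*f (b+t) - f (a+t)*f (b+s)) : ℝ) : ℂ))
      = (f (a+s) * (starRingEnd ℂ) (f (a+s))) * R b b
        + (f (b+s) * (starRingEnd ℂ) (f (b+s))) * R a a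
        - (f (a+s) * (starRingEnd ℂ) (f (b+s))) * R b a
        - (f (b+s) * (starRingEnd ℂ) (f (a+s))) * R a b := by
    intro s
    have hpt : ∀ t : ℝ, ((Complex.normSq (f (a+s)*f (b+t) - f (a+t)*f (b+s)) : ℝ) : ℂ)
        = (f (a+s) * (starRingEnd ℂ) (f (a+s))) * (f (b+t) * (starRingEnd ℂ) (f (b+t)))
          + (f (b+s) * (starRingEnd ℂ) (f (b+s))) * (f (a+t) * (starRingEnd ℂ) (f (a+t)))
          - (f (a+s) * (starRingEnd ℂ) (f (b+s))) * (f (b+t) * (starRingEnd ℂ) (f (a+t)))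
          - (f (b+s) * (starRingEnd ℂ) (f (a+s))) * (f (a+t) * (starRingEnd ℂ) (f (b+t))) := by
      intro t
      rw [← Complex.mul_conj]
      simp only [_root_.map_sub, _root_.map_mul]
      ring
    rw [intervalIntegral.integral_congr (g := fun t =>
        (f (a+s) * (starRingEnd ℂ) (f (a+s))) * (f (b+t) * (starRingEnd ℂ) (f (b+t)))
          + (f (b+s) * (starRingEnd ℂ) (f (b+s))) * (f (a+t) * (starRingEnd ℂ) (f (a+t)))
          - (f (a+s) * (starRingEnd ℂ) (f (b+s))) * (f (b+t) * (starRingEnd ℂ) (f (a+t)))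
          - (f (b+s) * (starRingEnd ℂ) (f (a+s))) * (f (a+t) * (starRingEnd ℂ) (f (b+t))))
        (fun t _ => hpt t)]
    rw [intervalIntegral.integral_sub (((hii _ b b).add (hii _ a a)).sub (hii _ b a)) (hii _ a b),
        intervalIntegral.integral_sub ((hii _ b b).add (hii _ a a)) (hii _ b a),
        intervalIntegral.integral_add (hii _ b b) (hii _ a a),
        intervalIntegral.integral_const_mul, intervalIntegral.integral_const_mul,
        intervalIntegral.integral_const_mul, intervalIntegral.integral_const_mul]
  have houter : IntervalIntegrable (fun s : ℝ => ∫ t in (0:ℝ)..h,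
      ((Complex.normSq (f (a+s)*f (b+t) - f (a+t)*f (b+s)) : ℝ) : ℂ)) volume 0 h := by
    apply Continuous.intervalIntegrable
    apply intervalIntegral.continuous_parametric_intervalIntegral_of_continuous'
    apply Complex.continuous_ofReal.comp
    apply Complex.continuous_normSq.comp
    apply Continuous.sub
    · exact (hfc.comp (continuous_const.add continuous_fst)).mul
        (hfc.comp (continuous_const.add continuous_snd))
    · exact (hfc.comp (continuous_const.add continuous_snd)).mul
        (hfc.comp (continuous_const.add continuous_fst))
  rw [← intervalIntegral.integral_ofReal]
  have step1 : (∫ s in (0:ℝ)..h, Complex.ofReal (∫ t in (0:ℝ)..h,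
        Complex.normSq (f (a+s)*f (b+t) - f (a+t)*f (b+s))))
      = ∫ s in (0:ℝ)..h,
        ((f (a+s) * (starRingEnd ℂ) (f (a+s))) * R b b
        + (f (b+s) * (starRingEnd ℂ) (f (b+s))) * R a a
        - (f (a+s) * (starRingEnd ℂ) (f (b+s))) * R b a
        - (f (b+s) * (starRingEnd ℂ) (f (a+s))) * R a b) := by
    apply intervalIntegral.integral_congr
    intro s _
    dsimp only
    rw [← intervalIntegral.integral_ofReal]
    exact inner s
  rw [step1]
  have hiim : ∀ (x y : ℝ) (c : ℂ), IntervalIntegrable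
      (fun s : ℝ => (f (x+s) * (starRingEnd ℂ) (f (y+s))) * c) volume 0 h :=
    fun x y c => ((hcont x y).mul continuous_const).intervalIntegrable _ _
  rw [intervalIntegral.integral_sub (((hiim a a _).add (hiim b b _)).sub (hiim a b _)) (hiim b a _),
      intervalIntegral.integral_sub ((hiim a a _).add (hiim b b _)) (hiim a b _),
      intervalIntegral.integral_add (hiim a a _) (hiim b b _),
      intervalIntegral.integral_mul_const, intervalIntegral.integral_mul_const,
      intervalIntegral.integral_mul_const, intervalIntegral.integral_mul_const]
  have hcc : (∫ x in (0:ℝ)..h, f (b+x) * (starRingEnd ℂ) (f (a+x)))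
      = (starRingEnd ℂ) (∫ x in (0:ℝ)..h, f (a+x) * (starRingEnd ℂ) (f (b+x))) := by
    rw [← intervalIntegral_conj]
    simp only [_root_.map_mul, Complex.conj_conj]
    congr 1; ext w; ring
  rw [hRsym, hcc]
  simp only [hR]
  ring

lemma key_est (f : ℝ → ℂ) (hf : ContDiff ℝ 1 f) {ε : ℝ} (hε : 0 < ε) :
    ∃ δ > 0, ∀ h : ℝ, 0 < h → h ≤ δ → ∀ a b : ℝ,
      a ∈ Set.Icc (0:ℝ) 1 → b ∈ Set.Icc (0:ℝ) 1 →
      |(∫ s in (0:ℝ)..h, ∫ t in (0:ℝ)..h,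
          Complex.normSq (f (a+s)*f (b+t) - f (a+t)*f (b+s)))
        - h^4/6 * Complex.normSq (f a * deriv f b - f b * deriv f a)| ≤ ε * h^4 := by
  have hfc : Continuous f := hf.continuous
  have hf'c : Continuous (deriv f) := hf.continuous_deriv le_rfl
  obtain ⟨M, hM0, hM⟩ := bound_M f hf
  set C : ℝ := 8*M^2 + 4 with hC
  have hCpos : 0 < C := by positivity
  set ε₀ : ℝ := min (ε / C) 1 with hε₀def
  have hε₀pos : 0 < ε₀ := lt_min (div_pos hε hCpos) one_pos
  have hε₀le1 : ε₀ ≤ 1 := min_le_right _ _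
  obtain ⟨δ₀, hδ₀, hP⟩ := uc_P f hf hε₀pos
  refine ⟨min (δ₀/2) 1, lt_min (by linarith) one_pos, fun h hh hhδ a b ha hb => ?_⟩
  have hh1 : h ≤ 1 := le_trans hhδ (min_le_right _ _)
  have hhδ₀ : h < δ₀ := lt_of_le_of_lt (le_trans hhδ (min_le_left _ _)) (by linarith)
  set Gc : ℂ := f a * deriv f b - f b * deriv f a with hGc
  have hmem : ∀ x : ℝ, x ∈ Set.Icc (0:ℝ) 1 → ∀ u : ℝ, u ∈ Set.Icc 0 h →
      x + u ∈ Set.Icc (0:ℝ) 2 := by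
    intro x hx u hu
    constructor
    · linarith [hx.1, hu.1]
    · linarith [hx.2, hu.2]
  have ha2 : a ∈ Set.Icc (0:ℝ) 2 := ⟨ha.1, by linarith [ha.2]⟩
  have hb2 : b ∈ Set.Icc (0:ℝ) 2 := ⟨hb.1, by linarith [hb.2]⟩
  -- step 1 : FTC + uniform continuity bound on W - (t-s)•Gc
  have hW : ∀ s ∈ Set.Icc (0:ℝ) h, ∀ t ∈ Set.Icc (0:ℝ) h,
      ‖(f (a+s)*f (b+t) - f (a+t)*f (b+s)) - (t - s) • Gc‖ ≤ 2*ε₀*h := by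
    intro s hs t ht
    have hi1 : IntervalIntegrable (fun τ => f (a+s) * deriv f (b+τ)) volume s t :=
      (continuous_const.mul (hf'c.comp (continuous_const.add continuous_id))).intervalIntegrable _ _
    have hi2 : IntervalIntegrable (fun τ => f (b+s) * deriv f (a+τ)) volume s t :=
      (continuous_const.mul (hf'c.comp (continuous_const.add continuous_id))).intervalIntegrable _ _
    have hrep : f (a+s)*f (b+t) - f (a+t)*f (b+s)
        = ∫ τ in s..t, (f (a+s) * deriv f (b+τ) - f (b+s) * deriv f (a+τ)) := by
      have e0 : f (a+s)*f (b+t) - f (a+t)*f (b+s)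
          = f (a+s) * (f (b+t) - f (b+s)) - f (b+s) * (f (a+t) - f (a+s)) := by ring
      rw [e0, ftc_shift f hf b s t, ftc_shift f hf a s t,
        ← intervalIntegral.integral_const_mul, ← intervalIntegral.integral_const_mul,
        ← intervalIntegral.integral_sub hi1 hi2]
    have hsm : (t - s) • Gc = ∫ _τ in s..t, Gc := by
      rw [intervalIntegral.integral_const]
    rw [hrep, hsm, ← intervalIntegral.integral_sub (hi1.sub hi2) intervalIntegrable_const]
    have hbd := intervalIntegral.norm_integral_le_of_norm_le_const (a := s) (b := t)
      (C := 2*ε₀)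
      (f := fun τ => (f (a+s) * deriv f (b+τ) - f (b+s) * deriv f (a+τ)) - Gc) ?_
    · refine le_trans hbd ?_
      have : |t - s| ≤ h := by
        rw [abs_le]
        constructor
        · linarith [hs.2, ht.1]
        · linarith [hs.1, ht.2]
      calc 2*ε₀ * |t - s| ≤ 2*ε₀ * h := by
            exact mul_le_mul_of_nonneg_left this (by positivity)
        _ = 2*ε₀*h := by ring
    · intro τ hτ
      have hτm : τ ∈ Set.Icc (0:ℝ) h := by
        have h1 : τ ∈ Set.uIcc s t := Set.uIoc_subset_uIcc hτ
        have h2 : Set.uIcc s t ⊆ Set.Icc (0:ℝ) h := Set.uIcc_subset_Icc hs ht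
        exact h2 h1
      have hd1 : ‖f (a+s) * deriv f (b+τ) - f a * deriv f b‖ ≤ ε₀ := by
        refine hP (a+s) (b+τ) a b (hmem a ha s hs) (hmem b hb τ hτm) ha2 hb2 ?_ ?_
        · rw [show a + s - a = s by ring, _root_.abs_of_nonneg hs.1]
          exact lt_of_le_of_lt hs.2 hhδ₀
        · rw [show b + τ - b = τ by ring, _root_.abs_of_nonneg hτm.1]
          exact lt_of_le_of_lt hτm.2 hhδ₀
      have hd2 : ‖f (b+s) * deriv f (a+τ) - f b * deriv f a‖ ≤ ε₀ := by
        refine hP (b+s) (a+τ) b a (hmem b hb s hs) (hmem a ha τ hτm) hb2 ha2 ?_ ?_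
        · rw [show b + s - b = s by ring, _root_.abs_of_nonneg hs.1]
          exact lt_of_le_of_lt hs.2 hhδ₀
        · rw [show a + τ - a = τ by ring, _root_.abs_of_nonneg hτm.1]
          exact lt_of_le_of_lt hτm.2 hhδ₀
      have e2 : (f (a+s) * deriv f (b+τ) - f (b+s) * deriv f (a+τ)) - Gc
          = (f (a+s) * deriv f (b+τ) - f a * deriv f b)
            - (f (b+s) * deriv f (a+τ) - f b * deriv f a) := by
        rw [hGc]; ring
      rw [e2]
      calc ‖_ - _‖ ≤ ‖f (a+s) * deriv f (b+τ) - f a * deriv f b‖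
            + ‖f (b+s) * deriv f (a+τ) - f b * deriv f a‖ := norm_sub_le _ _
        _ ≤ ε₀ + ε₀ := add_le_add hd1 hd2
        _ = 2*ε₀ := by ring
  -- step 2 : pointwise normSq estimate
  have hGb : ‖Gc‖ ≤ 2*M^2 := by
    rw [hGc]
    calc ‖f a * deriv f b - f b * deriv f a‖
        ≤ ‖f a * deriv f b‖ + ‖f b * deriv f a‖ := norm_sub_le _ _
      _ = ‖f a‖*‖deriv f b‖ + ‖f b‖*‖deriv f a‖ := by rw [norm_mul, norm_mul]
      _ ≤ M*M + M*M := add_le_add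
          (mul_le_mul (hM a ha2).1 (hM b hb2).2 (norm_nonneg _) hM0)
          (mul_le_mul (hM b hb2).1 (hM a ha2).2 (norm_nonneg _) hM0)
      _ = 2*M^2 := by ring
  have hpt : ∀ s ∈ Set.Icc (0:ℝ) h, ∀ t ∈ Set.Icc (0:ℝ) h,
      |Complex.normSq (f (a+s)*f (b+t) - f (a+t)*f (b+s)) - (t-s)^2 * Complex.normSq Gc|
        ≤ C*ε₀*h^2 := by
    intro s hs t ht
    have h1 := hW s hs t ht
    have hts : |t - s| ≤ h := by
      rw [abs_le]; constructor
      · linarith [hs.2, ht.1]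
      · linarith [hs.1, ht.2]
    have h2 : ‖(t-s) • Gc‖ ≤ h*(2*M^2) := by
      rw [norm_smul, Real.norm_eq_abs]
      exact mul_le_mul hts hGb (norm_nonneg _) (by linarith [hh.le, hh1])
    have h3 : ‖f (a+s)*f (b+t) - f (a+t)*f (b+s)‖ ≤ 2*ε₀*h + h*(2*M^2) := by
      calc ‖f (a+s)*f (b+t) - f (a+t)*f (b+s)‖
          = ‖((f (a+s)*f (b+t) - f (a+t)*f (b+s)) - (t-s)•Gc) + (t-s)•Gc‖ := by ring_nf
        _ ≤ ‖(f (a+s)*f (b+t) - f (a+t)*f (b+s)) - (t-s)•Gc‖ + ‖(t-s)•Gc‖ := norm_add_le _ _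
        _ ≤ 2*ε₀*h + h*(2*M^2) := add_le_add h1 h2
    have hkey := normSq_diff_le (f (a+s)*f (b+t) - f (a+t)*f (b+s)) ((t-s)•Gc)
    have hsq : Complex.normSq ((t-s)•Gc) = (t-s)^2 * Complex.normSq Gc := by
      rw [Complex.real_smul, Complex.normSq_mul, Complex.normSq_ofReal]; ring
    rw [hsq] at hkey
    have step : (‖f (a+s)*f (b+t) - f (a+t)*f (b+s)‖ + ‖(t-s)•Gc‖)
        * ‖(f (a+s)*f (b+t) - f (a+t)*f (b+s)) - (t-s)•Gc‖
        ≤ ((2*ε₀*h + h*(2*M^2)) + h*(2*M^2)) * (2*ε₀*h) := by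
      apply mul_le_mul (add_le_add h3 h2) h1 (norm_nonneg _)
      positivity
    refine le_trans hkey (le_trans step ?_)
    have hh0 : 0 ≤ h := hh.le
    rw [hC]
    nlinarith [mul_nonneg (sub_nonneg.2 hε₀le1) (mul_nonneg hε₀pos.le (sq_nonneg h)),
      mul_nonneg (mul_nonneg hM0 hM0) (sq_nonneg h), hε₀pos.le, sq_nonneg h]
  -- step 3 : integrate
  have hWcont : Continuous (fun q : ℝ × ℝ =>
      Complex.normSq (f (a+q.1)*f (b+q.2) - f (a+q.2)*f (b+q.1))) := by
    apply Complex.continuous_normSq.comp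
    exact ((hfc.comp (continuous_const.add continuous_fst)).mul
        (hfc.comp (continuous_const.add continuous_snd))).sub
      ((hfc.comp (continuous_const.add continuous_snd)).mul
        (hfc.comp (continuous_const.add continuous_fst)))
  have hint1 : ∀ s : ℝ, IntervalIntegrable
      (fun t => Complex.normSq (f (a+s)*f (b+t) - f (a+t)*f (b+s))) volume 0 h := by
    intro s
    exact (hWcont.comp (Continuous.prodMk_right s)).intervalIntegrable _ _
  have hint2 : ∀ s : ℝ, IntervalIntegrable
      (fun t => (t-s)^2 * Complex.normSq Gc) volume 0 h := by
    intro s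
    exact (((continuous_id.sub continuous_const).pow 2).mul continuous_const).intervalIntegrable _ _
  have hinner : ∀ s ∈ Set.Icc (0:ℝ) h,
      |(∫ t in (0:ℝ)..h, Complex.normSq (f (a+s)*f (b+t) - f (a+t)*f (b+s)))
        - (∫ t in (0:ℝ)..h, (t-s)^2 * Complex.normSq Gc)| ≤ (C*ε₀*h^2) * h := by
    intro s hs
    rw [← intervalIntegral.integral_sub (hint1 s) (hint2 s)]
    have hbd := intervalIntegral.norm_integral_le_of_norm_le_const (a := (0:ℝ)) (b := h)
      (C := C*ε₀*h^2)
      (f := fun t => Complex.normSq (f (a+s)*f (b+t) - f (a+t)*f (b+s))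
        - (t-s)^2 * Complex.normSq Gc) ?_
    · rw [Real.norm_eq_abs] at hbd
      refine le_trans hbd ?_
      rw [sub_zero, _root_.abs_of_pos hh]
    · intro t ht
      have htm : t ∈ Set.Icc (0:ℝ) h := by
        rw [Set.uIoc_of_le hh.le] at ht
        exact ⟨ht.1.le, ht.2⟩
      rw [Real.norm_eq_abs]
      exact hpt s hs t htm
  -- model double integral
  have hmodel : (∫ s in (0:ℝ)..h, ∫ t in (0:ℝ)..h, (t-s)^2 * Complex.normSq Gc)
      = h^4/6 * Complex.normSq Gc := by
    have e1 : ∀ s ∈ Set.uIcc (0:ℝ) h, (fun s => ∫ t in (0:ℝ)..h, (t-s)^2 * Complex.normSq Gc) s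
        = (fun s => (h-s)^3*(Complex.normSq Gc/3) - (0-s)^3*(Complex.normSq Gc/3)) s := by
      intro s _
      dsimp only
      rw [intervalIntegral.integral_mul_const,
        intervalIntegral.integral_comp_sub_right (fun x => x^2) s, integral_pow]
      norm_num
      ring
    rw [intervalIntegral.integral_congr e1]
    have i1 : IntervalIntegrable (fun x : ℝ => (h-x)^3*(Complex.normSq Gc/3)) volume 0 h :=
      Continuous.intervalIntegrable (((continuous_const.sub continuous_id).pow 3).mul continuous_const) _ _
    have i2 : IntervalIntegrable (fun x : ℝ => (0-x)^3*(Complex.normSq Gc/3)) volume 0 h :=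
      Continuous.intervalIntegrable (((continuous_const.sub continuous_id).pow 3).mul continuous_const) _ _
    rw [intervalIntegral.integral_sub i1 i2,
      intervalIntegral.integral_mul_const, intervalIntegral.integral_mul_const,
      intervalIntegral.integral_comp_sub_left (fun x => x^3) h,
      intervalIntegral.integral_comp_sub_left (fun x => x^3) 0, integral_pow, integral_pow]
    norm_num
    ring
  -- outer comparison
  have hcont1 : Continuous (fun s : ℝ => ∫ t in (0:ℝ)..h,
      Complex.normSq (f (a+s)*f (b+t) - f (a+t)*f (b+s))) := by
    apply intervalIntegral.continuous_parametric_intervalIntegral_of_continuous'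
    exact hWcont
  have hcont2 : Continuous (fun s : ℝ => ∫ t in (0:ℝ)..h, (t-s)^2 * Complex.normSq Gc) := by
    apply intervalIntegral.continuous_parametric_intervalIntegral_of_continuous'
    exact ((continuous_snd.sub continuous_fst).pow 2).mul continuous_const
  have hout : |(∫ s in (0:ℝ)..h, ∫ t in (0:ℝ)..h,
        Complex.normSq (f (a+s)*f (b+t) - f (a+t)*f (b+s)))
      - (∫ s in (0:ℝ)..h, ∫ t in (0:ℝ)..h, (t-s)^2 * Complex.normSq Gc)| ≤ (C*ε₀*h^2*h)*h := by
    rw [← intervalIntegral.integral_sub (hcont1.intervalIntegrable _ _)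
      (hcont2.intervalIntegrable _ _)]
    have hbd := intervalIntegral.norm_integral_le_of_norm_le_const (a := (0:ℝ)) (b := h)
      (C := C*ε₀*h^2*h)
      (f := fun s => (∫ t in (0:ℝ)..h, Complex.normSq (f (a+s)*f (b+t) - f (a+t)*f (b+s)))
        - (∫ t in (0:ℝ)..h, (t-s)^2 * Complex.normSq Gc)) ?_
    · rw [Real.norm_eq_abs] at hbd
      refine le_trans hbd ?_
      rw [sub_zero, _root_.abs_of_pos hh]
    · intro s hsm
      have hsm' : s ∈ Set.Icc (0:ℝ) h := by
        rw [Set.uIoc_of_le hh.le] at hsm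
        exact ⟨hsm.1.le, hsm.2⟩
      rw [Real.norm_eq_abs]
      exact hinner s hsm'
  rw [hmodel] at hout
  refine le_trans hout ?_
  have hfin : C*ε₀ ≤ ε := by
    have : ε₀ ≤ ε / C := min_le_left _ _
    calc C*ε₀ ≤ C*(ε/C) := mul_le_mul_of_nonneg_left this hCpos.le
      _ = ε := by field_simp
  calc C*ε₀*h^2*h*h = (C*ε₀)*h^4 := by ring
    _ ≤ ε * h^4 := mul_le_mul_of_nonneg_right hfin (by positivity)

lemma sum_algebra (n : ℕ) (x y : Fin n → ℂ) :
    ∑ j : Fin n, ∑ j' : Fin n, Complex.normSq (x j * y j' - x j' * y j)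
      = 2*((∑ j : Fin n, Complex.normSq (x j)) * (∑ j : Fin n, Complex.normSq (y j))
        - Complex.normSq (∑ j : Fin n, x j * (starRingEnd ℂ) (y j))) := by
  have hterm : ∀ j j' : Fin n, Complex.normSq (x j * y j' - x j' * y j)
      = Complex.normSq (x j) * Complex.normSq (y j')
        + Complex.normSq (x j') * Complex.normSq (y j)
        - 2 * ((x j * (starRingEnd ℂ) (y j))
            * (starRingEnd ℂ) (x j' * (starRingEnd ℂ) (y j'))).re := by
    intro j j'
    rw [Complex.normSq_sub, Complex.normSq_mul, Complex.normSq_mul]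
    congr 2
    congr 1
    simp only [_root_.map_mul, Complex.conj_conj]
    ring
  simp only [hterm]
  have e1 : ∑ j : Fin n, ∑ j' : Fin n,
      (Complex.normSq (x j) * Complex.normSq (y j')
        + Complex.normSq (x j') * Complex.normSq (y j)
        - 2 * ((x j * (starRingEnd ℂ) (y j))
            * (starRingEnd ℂ) (x j' * (starRingEnd ℂ) (y j'))).re)
      = (∑ j : Fin n, ∑ j' : Fin n, Complex.normSq (x j) * Complex.normSq (y j'))
        + (∑ j : Fin n, ∑ j' : Fin n, Complex.normSq (x j') * Complex.normSq (y j))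
        - 2 * ∑ j : Fin n, ∑ j' : Fin n, ((x j * (starRingEnd ℂ) (y j))
            * (starRingEnd ℂ) (x j' * (starRingEnd ℂ) (y j'))).re := by
    simp only [Finset.sum_sub_distrib, Finset.sum_add_distrib, Finset.mul_sum]
  rw [e1]
  have e2 : (∑ j : Fin n, ∑ j' : Fin n, Complex.normSq (x j) * Complex.normSq (y j'))
      = (∑ j : Fin n, Complex.normSq (x j)) * (∑ j : Fin n, Complex.normSq (y j)) := by
    rw [Finset.sum_mul_sum]
  have e3 : (∑ j : Fin n, ∑ j' : Fin n, Complex.normSq (x j') * Complex.normSq (y j))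
      = (∑ j : Fin n, Complex.normSq (x j)) * (∑ j : Fin n, Complex.normSq (y j)) := by
    rw [Finset.sum_comm, Finset.sum_mul_sum]
  have e4 : ∑ j : Fin n, ∑ j' : Fin n, ((x j * (starRingEnd ℂ) (y j))
        * (starRingEnd ℂ) (x j' * (starRingEnd ℂ) (y j'))).re
      = Complex.normSq (∑ j : Fin n, x j * (starRingEnd ℂ) (y j)) := by
    have : ∑ j : Fin n, ∑ j' : Fin n, ((x j * (starRingEnd ℂ) (y j))
          * (starRingEnd ℂ) (x j' * (starRingEnd ℂ) (y j'))).re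
        = ((∑ j : Fin n, x j * (starRingEnd ℂ) (y j))
          * (starRingEnd ℂ) (∑ j : Fin n, x j * (starRingEnd ℂ) (y j))).re := by
      rw [_root_.map_sum, Finset.sum_mul_sum, Complex.re_sum]
      congr 1; ext j
      rw [Complex.re_sum]
    rw [this, Complex.mul_conj, Complex.ofReal_re]
  rw [e2, e3, e4]
  ring

end PurityAux

/-- Theorem 1 (limit form): for a C¹, L²-normalized `f : [0,1] → ℂ`, the purity `p_k` of the
reduced density matrix of the first `k` qubits of the (N → ∞) binary-grid encoding,
given by the kernel `ρ_k(u,u') = (1/2^k)∫₀¹ f(u+v/2^k)·conj(f(u'+v/2^k)) dv` on the `2^k`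
grid points, satisfies `lim_{k→∞} 4^k (1 − p_k) = g₁(f)/6`. -/
theorem purity_limit (f : ℝ → ℂ) (hf : ContDiff ℝ 1 f)
    (hnorm : ∫ u in (0:ℝ)..1, Complex.normSq (f u) = 1)
    (ρ : ∀ k : ℕ, Matrix (Fin (2 ^ k)) (Fin (2 ^ k)) ℂ)
    (hρ : ∀ k (j j' : Fin (2 ^ k)), ρ k j j' =
      (1 / 2 ^ k : ℝ) * ∫ v in (0:ℝ)..1,
        f ((j : ℝ) / 2 ^ k + v / 2 ^ k) * (starRingEnd ℂ) (f ((j' : ℝ) / 2 ^ k + v / 2 ^ k)))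
    (p : ℕ → ℝ)
    (hp : ∀ k, p k = ((ρ k * ρ k).trace).re)
    (g1 : ℂ)
    (hg1 : g1 = (∫ u in (0:ℝ)..1, Complex.normSq (deriv f u) : ℝ)
        - (∫ u in (0:ℝ)..1, deriv f u * (starRingEnd ℂ) (f u))
          * (∫ u in (0:ℝ)..1, f u * (starRingEnd ℂ) (deriv f u))) :
    Filter.Tendsto (fun k : ℕ => (4:ℝ) ^ k * (1 - p k)) Filter.atTop (nhds (g1.re / 6)) := by
  have hfc : Continuous f := hf.continuous
  have hf'c : Continuous (deriv f) := hf.continuous_deriv le_rfl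
  have h2k : ∀ k : ℕ, (0:ℝ) < 2^k := fun k => by positivity
  -- Step 1 : the matrix entries as integrals over [0, 2⁻ᵏ]
  have rho_eq : ∀ k (j j' : Fin (2^k)), ρ k j j'
      = ∫ w in (0:ℝ)..((2:ℝ)^k)⁻¹,
          f ((j:ℝ)/2^k + w) * (starRingEnd ℂ) (f ((j':ℝ)/2^k + w)) := by
    intro k j j'
    rw [hρ]
    rw [intervalIntegral.integral_comp_div
      (fun w => f ((j:ℝ)/2^k + w) * (starRingEnd ℂ) (f ((j':ℝ)/2^k + w)))
      (ne_of_gt (h2k k)), Complex.real_smul, ← mul_assoc, ← Complex.ofReal_mul,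
      zero_div, one_div, inv_mul_cancel₀ (ne_of_gt (h2k k)), Complex.ofReal_one, one_mul]
  -- hermiticity
  have herm : ∀ k (j j' : Fin (2^k)), ρ k j' j = (starRingEnd ℂ) (ρ k j j') := by
    intro k j j'
    rw [rho_eq, rho_eq, ← intervalIntegral_conj]
    congr 1
    ext w
    simp only [_root_.map_mul, Complex.conj_conj]
    ring
  -- Step 2 : trace = 1
  have trace_one : ∀ k, ∑ j : Fin (2^k), ρ k j j = 1 := by
    intro k
    have e1 : ∀ j : Fin (2^k), ρ k j j
        = ∫ u in ((j:ℝ)/2^k)..(((j:ℝ)+1)/2^k), f u * (starRingEnd ℂ) (f u) := by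
      intro j
      rw [rho_eq]
      rw [intervalIntegral.integral_comp_add_left
        (fun u => f u * (starRingEnd ℂ) (f u)) ((j:ℝ)/2^k)]
      rw [add_zero, show (j:ℝ)/2^k + ((2:ℝ)^k)⁻¹ = ((j:ℝ)+1)/2^k by
        field_simp]
    simp only [e1]
    rw [Fin.sum_univ_eq_sum_range
      (fun i : ℕ => ∫ u in ((i:ℝ)/2^k)..(((i:ℝ)+1)/2^k), f u * (starRingEnd ℂ) (f u)) (2^k)]
    have hadj := intervalIntegral.sum_integral_adjacent_intervals
      (a := fun i : ℕ => (i:ℝ)/2^k) (n := 2^k) (μ := MeasureTheory.volume)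
      (fun i _ => ((hfc.mul (Complex.continuous_conj.comp hfc)).intervalIntegrable _ _))
    simp only [Nat.cast_add, Nat.cast_one, Nat.cast_zero, zero_div] at hadj
    have hcast : ((2^k : ℕ) : ℝ) = (2:ℝ)^k := by push_cast; ring
    rw [hcast] at hadj
    rw [div_self (ne_of_gt (h2k k))] at hadj
    have hadj' : ∑ i ∈ Finset.range (2^k),
        ∫ u in ((i:ℝ)/2^k)..(((i:ℝ)+1)/2^k), f u * (starRingEnd ℂ) (f u)
        = ∫ u in (0:ℝ)..1, f u * (starRingEnd ℂ) (f u) := hadj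
    rw [hadj']
    have e2 : ∀ u : ℝ, f u * (starRingEnd ℂ) (f u) = ((Complex.normSq (f u) : ℝ) : ℂ) :=
      fun u => Complex.mul_conj _
    simp only [e2]
    rw [intervalIntegral.integral_ofReal, hnorm, Complex.ofReal_one]
  -- Step 3 : purity as a double sum of |entries|²
  have hpk : ∀ k, p k = ∑ j : Fin (2^k), ∑ j' : Fin (2^k), Complex.normSq (ρ k j j') := by
    intro k
    rw [hp]
    have e : (ρ k * ρ k).trace = ∑ j : Fin (2^k), ∑ j' : Fin (2^k), ρ k j j' * ρ k j' j := by
      simp [Matrix.trace, Matrix.diag, Matrix.mul_apply]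
    rw [e]
    have e2 : ∀ j j' : Fin (2^k), ρ k j j' * ρ k j' j
        = ((Complex.normSq (ρ k j j') : ℝ) : ℂ) := by
      intro j j'
      rw [herm k j j', Complex.mul_conj]
    simp only [e2]
    rw [show (∑ j : Fin (2^k), ∑ j' : Fin (2^k), ((Complex.normSq (ρ k j j') : ℝ) : ℂ))
      = (((∑ j : Fin (2^k), ∑ j' : Fin (2^k), Complex.normSq (ρ k j j') : ℝ)) : ℂ) by
        push_cast; rfl]
    rw [Complex.ofReal_re]
  -- Step 4 : 1 - p k as a sum of Gram determinants
  have hone : ∀ k, (1:ℝ) - p k = ∑ j : Fin (2^k), ∑ j' : Fin (2^k),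
      ((ρ k j j * ρ k j' j').re - Complex.normSq (ρ k j j')) := by
    intro k
    have h1 : (1:ℂ) = ∑ j : Fin (2^k), ∑ j' : Fin (2^k), ρ k j j * ρ k j' j' := by
      rw [← Finset.sum_mul_sum, trace_one k, one_mul]
    have h2 : (1:ℝ) = ∑ j : Fin (2^k), ∑ j' : Fin (2^k), (ρ k j j * ρ k j' j').re := by
      have h3 := congrArg Complex.re h1
      simpa [Complex.re_sum] using h3
    rw [hpk k]
    simp only [Finset.sum_sub_distrib]
    rw [← h2]
  -- Step 5 : per-pair Lagrange identity
  have hper : ∀ k (j j' : Fin (2^k)),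
      (ρ k j j * ρ k j' j').re - Complex.normSq (ρ k j j')
      = (∫ s in (0:ℝ)..((2:ℝ)^k)⁻¹, ∫ t in (0:ℝ)..((2:ℝ)^k)⁻¹,
          Complex.normSq (f ((j:ℝ)/2^k+s)*f ((j':ℝ)/2^k+t)
            - f ((j:ℝ)/2^k+t)*f ((j':ℝ)/2^k+s))) / 2 := by
    intro k j j'
    have hl := lagrange_identity f hfc (((2:ℝ)^k)⁻¹) ((j:ℝ)/2^k) ((j':ℝ)/2^k)
    rw [← rho_eq k j j, ← rho_eq k j' j', ← rho_eq k j j'] at hl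
    rw [Complex.mul_conj] at hl
    have hre := congrArg Complex.re hl
    simp only [Complex.ofReal_re, Complex.mul_re, Complex.sub_re, Complex.sub_im,
      Complex.ofReal_im, Complex.re_ofNat, Complex.im_ofNat] at hre
    rw [Complex.mul_re]
    linarith
  -- the Riemann sum comparison term
  set T : ℕ → ℝ := fun k => ∑ j : Fin (2^k), ∑ j' : Fin (2^k),
    ((((2:ℝ)^k)⁻¹)^2/12) * Complex.normSq (f ((j:ℝ)/2^k) * deriv f ((j':ℝ)/2^k)
      - f ((j':ℝ)/2^k) * deriv f ((j:ℝ)/2^k)) with hTdef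
  -- Step 6 : 4^k (1 - p k) - T k → 0
  have hdiff : Filter.Tendsto (fun k => (4:ℝ)^k * (1 - p k) - T k) Filter.atTop (nhds 0) := by
    rw [NormedAddCommGroup.tendsto_atTop]
    intro ε hε
    obtain ⟨δ, hδpos, hkey⟩ := key_est f hf hε
    obtain ⟨K, hK⟩ := pow_unbounded_of_one_lt (1/δ) (one_lt_two (α := ℝ))
    refine ⟨K, fun k hk => ?_⟩
    have hhpos : (0:ℝ) < ((2:ℝ)^k)⁻¹ := by positivity
    have hhδ : ((2:ℝ)^k)⁻¹ ≤ δ := by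
      rw [inv_le_comm₀ (h2k k) hδpos, ← one_div]
      calc 1/δ ≤ (2:ℝ)^K := le_of_lt hK
        _ ≤ (2:ℝ)^k := pow_le_pow_right₀ one_le_two hk
    -- pointwise bound on each pair
    have hpair : ∀ (j j' : Fin (2^k)),
        |(4:ℝ)^k * ((∫ s in (0:ℝ)..((2:ℝ)^k)⁻¹, ∫ t in (0:ℝ)..((2:ℝ)^k)⁻¹,
            Complex.normSq (f ((j:ℝ)/2^k+s)*f ((j':ℝ)/2^k+t)
              - f ((j:ℝ)/2^k+t)*f ((j':ℝ)/2^k+s))) / 2)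
          - ((((2:ℝ)^k)⁻¹)^2/12) * Complex.normSq (f ((j:ℝ)/2^k) * deriv f ((j':ℝ)/2^k)
              - f ((j':ℝ)/2^k) * deriv f ((j:ℝ)/2^k))|
          ≤ ε * (((2:ℝ)^k)⁻¹)^2 / 2 := by
      intro j j'
      have hmemj : (j:ℝ)/2^k ∈ Set.Icc (0:ℝ) 1 := by
        constructor
        · positivity
        · rw [div_le_one (h2k k)]
          have := j.isLt
          exact_mod_cast le_of_lt (by exact_mod_cast this)
      have hmemj' : (j':ℝ)/2^k ∈ Set.Icc (0:ℝ) 1 := by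
        constructor
        · positivity
        · rw [div_le_one (h2k k)]
          have := j'.isLt
          exact_mod_cast le_of_lt (by exact_mod_cast this)
      have hk2 := hkey (((2:ℝ)^k)⁻¹) hhpos hhδ ((j:ℝ)/2^k) ((j':ℝ)/2^k) hmemj hmemj'
      have h4 : (4:ℝ)^k = ((2:ℝ)^k)^2 := by
        rw [← pow_mul, mul_comm, pow_mul]
        norm_num
      set D : ℝ := ∫ s in (0:ℝ)..((2:ℝ)^k)⁻¹, ∫ t in (0:ℝ)..((2:ℝ)^k)⁻¹,
          Complex.normSq (f ((j:ℝ)/2^k+s)*f ((j':ℝ)/2^k+t)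
            - f ((j:ℝ)/2^k+t)*f ((j':ℝ)/2^k+s)) with hD
      set N : ℝ := Complex.normSq (f ((j:ℝ)/2^k) * deriv f ((j':ℝ)/2^k)
          - f ((j':ℝ)/2^k) * deriv f ((j:ℝ)/2^k)) with hN
      -- hk2 : |D - (((2:ℝ)^k)⁻¹)^4/6 * N| ≤ ε * (((2:ℝ)^k)⁻¹)^4
      have e : (4:ℝ)^k * (D/2) - ((((2:ℝ)^k)⁻¹)^2/12) * N
          = ((2:ℝ)^k)^2/2 * (D - (((2:ℝ)^k)⁻¹)^4/6 * N) := by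
        rw [h4]
        field_simp
        ring
      rw [e, abs_mul, _root_.abs_of_pos (by positivity : (0:ℝ) < ((2:ℝ)^k)^2/2)]
      calc ((2:ℝ)^k)^2/2 * |D - (((2:ℝ)^k)⁻¹)^4/6 * N|
          ≤ ((2:ℝ)^k)^2/2 * (ε * (((2:ℝ)^k)⁻¹)^4) := by
            exact mul_le_mul_of_nonneg_left hk2 (by positivity)
        _ = ε * (((2:ℝ)^k)⁻¹)^2 / 2 := by
            field_simp
    -- sum over pairs
    have hsum : (4:ℝ)^k * (1 - p k) - T k
        = ∑ j : Fin (2^k), ∑ j' : Fin (2^k),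
          ((4:ℝ)^k * ((∫ s in (0:ℝ)..((2:ℝ)^k)⁻¹, ∫ t in (0:ℝ)..((2:ℝ)^k)⁻¹,
              Complex.normSq (f ((j:ℝ)/2^k+s)*f ((j':ℝ)/2^k+t)
                - f ((j:ℝ)/2^k+t)*f ((j':ℝ)/2^k+s))) / 2)
            - ((((2:ℝ)^k)⁻¹)^2/12) * Complex.normSq (f ((j:ℝ)/2^k) * deriv f ((j':ℝ)/2^k)
                - f ((j':ℝ)/2^k) * deriv f ((j:ℝ)/2^k))) := by
      rw [hone k]
      simp only [hper k]
      simp only [hTdef]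
      simp only [Finset.sum_sub_distrib, Finset.mul_sum]
    rw [sub_zero, Real.norm_eq_abs, hsum]
    calc |∑ j : Fin (2^k), ∑ j' : Fin (2^k), _| ≤ ∑ j : Fin (2^k), ∑ j' : Fin (2^k),
          |((4:ℝ)^k * ((∫ s in (0:ℝ)..((2:ℝ)^k)⁻¹, ∫ t in (0:ℝ)..((2:ℝ)^k)⁻¹,
              Complex.normSq (f ((j:ℝ)/2^k+s)*f ((j':ℝ)/2^k+t)
                - f ((j:ℝ)/2^k+t)*f ((j':ℝ)/2^k+s))) / 2)
            - ((((2:ℝ)^k)⁻¹)^2/12) * Complex.normSq (f ((j:ℝ)/2^k) * deriv f ((j':ℝ)/2^k)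
                - f ((j':ℝ)/2^k) * deriv f ((j:ℝ)/2^k)))| := by
          refine le_trans (Finset.abs_sum_le_sum_abs _ _) ?_
          exact Finset.sum_le_sum (fun j _ => Finset.abs_sum_le_sum_abs _ _)
      _ ≤ ∑ _j : Fin (2^k), ∑ _j' : Fin (2^k), ε * (((2:ℝ)^k)⁻¹)^2 / 2 := by
          exact Finset.sum_le_sum (fun j _ => Finset.sum_le_sum (fun j' _ => hpair j j'))
      _ = (2^k : ℝ)^2 * (ε * (((2:ℝ)^k)⁻¹)^2 / 2) := by
          rw [Finset.sum_const, Finset.sum_const, Finset.card_univ, Fintype.card_fin]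
          rw [nsmul_eq_mul, nsmul_eq_mul, ← mul_assoc]
          congr 1
          push_cast
          ring
      _ = ε / 2 := by
          field_simp
      _ < ε := by linarith
  -- Step 7 : limit of T
  have hcomp : Filter.Tendsto (fun k : ℕ => 2^k) Filter.atTop Filter.atTop :=
    tendsto_pow_atTop_atTop_of_one_lt one_lt_two
  have hcast2 : ∀ k : ℕ, ((2^k : ℕ) : ℝ) = (2:ℝ)^k := by intro k; push_cast; ring
  have hS1 : Filter.Tendsto (fun k : ℕ => ((2:ℝ)^k)⁻¹ *
      ∑ j : Fin (2^k), Complex.normSq (f ((j:ℝ)/2^k))) Filter.atTop (nhds 1) := by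
    have := (riemann_tendsto (fun u => Complex.normSq (f u))
      (Complex.continuous_normSq.comp hfc)).comp hcomp
    rw [hnorm] at this
    refine this.congr (fun k => ?_)
    simp only [Function.comp_apply, smul_eq_mul, hcast2]
    congr 1
    rw [Fin.sum_univ_eq_sum_range (fun i : ℕ => Complex.normSq (f ((i:ℝ)/2^k))) (2^k)]
  have hS2 : Filter.Tendsto (fun k : ℕ => ((2:ℝ)^k)⁻¹ *
      ∑ j : Fin (2^k), Complex.normSq (deriv f ((j:ℝ)/2^k))) Filter.atTop
      (nhds (∫ u in (0:ℝ)..1, Complex.normSq (deriv f u))) := by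
    have := (riemann_tendsto (fun u => Complex.normSq (deriv f u))
      (Complex.continuous_normSq.comp hf'c)).comp hcomp
    refine this.congr (fun k => ?_)
    simp only [Function.comp_apply, smul_eq_mul, hcast2]
    congr 1
    rw [Fin.sum_univ_eq_sum_range (fun i : ℕ => Complex.normSq (deriv f ((i:ℝ)/2^k))) (2^k)]
  have hS3 : Filter.Tendsto (fun k : ℕ => ((2:ℝ)^k)⁻¹ •
      ∑ j : Fin (2^k), f ((j:ℝ)/2^k) * (starRingEnd ℂ) (deriv f ((j:ℝ)/2^k))) Filter.atTop
      (nhds (∫ u in (0:ℝ)..1, f u * (starRingEnd ℂ) (deriv f u))) := by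
    have := (riemann_tendsto (fun u => f u * (starRingEnd ℂ) (deriv f u))
      (hfc.mul (Complex.continuous_conj.comp hf'c))).comp hcomp
    refine this.congr (fun k => ?_)
    simp only [Function.comp_apply, hcast2]
    congr 1
    rw [Fin.sum_univ_eq_sum_range
      (fun i : ℕ => f ((i:ℝ)/2^k) * (starRingEnd ℂ) (deriv f ((i:ℝ)/2^k))) (2^k)]
  -- rewrite T via sum_algebra
  have hTeq : ∀ k, T k = ((((2:ℝ)^k)⁻¹ * ∑ j : Fin (2^k), Complex.normSq (f ((j:ℝ)/2^k)))
        * (((2:ℝ)^k)⁻¹ * ∑ j : Fin (2^k), Complex.normSq (deriv f ((j:ℝ)/2^k)))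
      - Complex.normSq (((2:ℝ)^k)⁻¹ •
          ∑ j : Fin (2^k), f ((j:ℝ)/2^k) * (starRingEnd ℂ) (deriv f ((j:ℝ)/2^k)))) / 6 := by
    intro k
    simp only [hTdef]
    have halg := sum_algebra (2^k) (fun j : Fin (2^k) => f ((j:ℝ)/2^k))
      (fun j : Fin (2^k) => deriv f ((j:ℝ)/2^k))
    have e : ∑ j : Fin (2^k), ∑ j' : Fin (2^k),
        ((((2:ℝ)^k)⁻¹^2/12) * Complex.normSq (f ((j:ℝ)/2^k) * deriv f ((j':ℝ)/2^k)
          - f ((j':ℝ)/2^k) * deriv f ((j:ℝ)/2^k)))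
        = ((((2:ℝ)^k)⁻¹)^2/12) * ∑ j : Fin (2^k), ∑ j' : Fin (2^k),
          Complex.normSq (f ((j:ℝ)/2^k) * deriv f ((j':ℝ)/2^k)
            - f ((j':ℝ)/2^k) * deriv f ((j:ℝ)/2^k)) := by
      rw [Finset.mul_sum]
      congr 1; ext j
      rw [Finset.mul_sum]
    rw [e, halg]
    rw [show ∀ (r : ℝ) (w : ℂ), Complex.normSq (r • w) = r^2 * Complex.normSq w from
      fun r w => by rw [Complex.real_smul, Complex.normSq_mul, Complex.normSq_ofReal]; ring]
    field_simp
    ring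
  have hTlim : Filter.Tendsto T Filter.atTop
      (nhds ((1 * (∫ u in (0:ℝ)..1, Complex.normSq (deriv f u))
        - Complex.normSq (∫ u in (0:ℝ)..1, f u * (starRingEnd ℂ) (deriv f u))) / 6)) := by
    have hns : Filter.Tendsto (fun k : ℕ => Complex.normSq (((2:ℝ)^k)⁻¹ •
        ∑ j : Fin (2^k), f ((j:ℝ)/2^k) * (starRingEnd ℂ) (deriv f ((j:ℝ)/2^k))))
        Filter.atTop (nhds (Complex.normSq
          (∫ u in (0:ℝ)..1, f u * (starRingEnd ℂ) (deriv f u)))) :=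
      (Complex.continuous_normSq.tendsto _).comp hS3
    have := (((hS1.mul hS2).sub hns).div_const 6)
    refine Filter.Tendsto.congr (fun k => (hTeq k).symm) this
  -- Step 8 : conclude
  have hfinal : Filter.Tendsto (fun k : ℕ => (4:ℝ)^k * (1 - p k)) Filter.atTop
      (nhds ((1 * (∫ u in (0:ℝ)..1, Complex.normSq (deriv f u))
        - Complex.normSq (∫ u in (0:ℝ)..1, f u * (starRingEnd ℂ) (deriv f u))) / 6)) := by
    have := hdiff.add hTlim
    rw [zero_add] at this
    refine this.congr (fun k => by ring)
  -- identify the limit with g1.re / 6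
  have hid : g1.re / 6 = (1 * (∫ u in (0:ℝ)..1, Complex.normSq (deriv f u))
      - Complex.normSq (∫ u in (0:ℝ)..1, f u * (starRingEnd ℂ) (deriv f u))) / 6 := by
    have hw : (∫ u in (0:ℝ)..1, deriv f u * (starRingEnd ℂ) (f u))
        = (starRingEnd ℂ) (∫ u in (0:ℝ)..1, f u * (starRingEnd ℂ) (deriv f u)) := by
      rw [← _root_.intervalIntegral_conj]
      congr 1
      ext u
      simp only [_root_.map_mul, Complex.conj_conj]
      ring
    rw [hg1, hw]
    set z : ℂ := ∫ u in (0:ℝ)..1, f u * (starRingEnd ℂ) (deriv f u) with hz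
    rw [show (starRingEnd ℂ) z * z = ((Complex.normSq z : ℝ) : ℂ) by
      rw [mul_comm, Complex.mul_conj]]
    simp [Complex.sub_re, Complex.ofReal_re]
  rw [hid]
  exact hfinal
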